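/- Let Q be a real symmetric n×n matrix with all eigenvalues nonzero, and λ ∈ ℂ with Re λ ≥ 0, λ ≠ 0. Then there exists a unique matrix P (over ℂ) that is diagonalized in the same orthonormal eigenbasis as Q, satisfies P² − PQ − λI = 0, and all of whose eigenvalues σ satisfy Re σ > 0. Its eigenvalues are σ_j = (h_j + sqrt(h_j² + 4λ))/2 where h_j are the eigenvalues of Q and sqrt is the principal branch. -/

import Mathlib

lemma quad_key (a : ℝ) (ha : a ≠ 0) (lam : ℂ) (hre : 0 ≤ lam.re) (hne : lam ≠ 0) :
    (0 < (((a:ℂ) + ((a:ℂ)^2 + 4*lam) ^ ((1:ℂ)/2))/2).re) ∧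
    ((((a:ℂ) + ((a:ℂ)^2 + 4*lam) ^ ((1:ℂ)/2))/2)^2
      - a * (((a:ℂ) + ((a:ℂ)^2 + 4*lam) ^ ((1:ℂ)/2))/2) - lam = 0) ∧
    ∀ τ : ℂ, 0 < τ.re → τ^2 - a*τ - lam = 0 →
      τ = ((a:ℂ) + ((a:ℂ)^2 + 4*lam) ^ ((1:ℂ)/2))/2 := by
  set w : ℂ := (a:ℂ)^2 + 4*lam with hw
  have ha2 : (0:ℝ) < a^2 := by positivity
  have hwne : w ≠ 0 := by
    intro h0
    have h0' : a^2 + 4*lam.re = 0 := by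
      have := congrArg Complex.re h0; simpa [hw, ← Complex.ofReal_pow] using this
    linarith
  set s : ℂ := w ^ ((1:ℂ)/2) with hs
  have hs2 : s^2 = w := by
    rw [hs, sq, ← Complex.cpow_add _ _ hwne]
    norm_num
  have hs2' : s^2 = (a:ℂ)^2 + 4*lam := hs2.trans hw
  have hsre : 0 ≤ s.re := by
    have h12 : ((1:ℂ)/2) = ((1/2 : ℝ) : ℂ) := by norm_num
    rw [hs, h12, Complex.cpow_ofReal_re]
    apply mul_nonneg (Real.rpow_nonneg (norm_nonneg _) _)
    apply Real.cos_nonneg_of_mem_Icc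
    constructor
    · nlinarith [Complex.neg_pi_lt_arg w, Real.pi_pos]
    · nlinarith [Complex.arg_le_pi w, Real.pi_pos]
  have hre2 : s.re^2 - s.im^2 = a^2 + 4*lam.re := by
    have := congrArg Complex.re hs2'
    simpa [Complex.mul_re, sq] using this
  have him2 : 2 * s.re * s.im = 4 * lam.im := by
    have := congrArg Complex.im hs2'
    simp [Complex.mul_im, sq] at this
    linarith
  have hkey : a^2 < s.re^2 := by
    rcases lt_or_eq_of_le hre with hpos | hzero
    · nlinarith [sq_nonneg s.im]
    · have hz0 : lam.re = 0 := hzero.symm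
      have him : lam.im ≠ 0 := by
        intro h0; exact hne (Complex.ext hz0 (by simp [h0]))
      have hsim : s.im ≠ 0 := by
        intro h0; rw [h0] at him2; simp at him2; exact him him2
      have h2 : 0 < s.im^2 := by rcases hsim.lt_or_gt with hlt | hlt <;> nlinarith
      nlinarith
  have habs : a < s.re := by nlinarith [le_abs_self a, sq_abs a, abs_nonneg a]
  have hnabs : -a < s.re := by nlinarith [neg_abs_le a, sq_abs a, abs_nonneg a]
  have h2c : (2:ℂ) = ((2:ℝ):ℂ) := by norm_num
  refine ⟨?_, by linear_combination hs2' / 4, ?_⟩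
  · rw [h2c, Complex.div_ofReal_re]
    simp only [Complex.add_re, Complex.ofReal_re]
    linarith
  · intro τ hτre hτeq
    have hfac : (τ - ((a:ℂ)+s)/2) * (τ - ((a:ℂ)-s)/2) = 0 := by
      linear_combination hτeq - hs2'/4
    rcases mul_eq_zero.mp hfac with h1 | h1
    · linear_combination h1
    · exfalso
      have hτ : τ = ((a:ℂ)-s)/2 := by linear_combination h1
      have : τ.re = (a - s.re)/2 := by
        rw [hτ, h2c, Complex.div_ofReal_re]
        simp [Complex.sub_re]
      linarith

open Matrix
theorem stmt_16 (n : ℕ) (Q T : Matrix (Fin n) (Fin n) ℝ) (h : Fin n → ℝ)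
    (hQsymm : Q.IsSymm) (hT : T * Tᵀ = 1)
    (hdiag : Q = Tᵀ * Matrix.diagonal h * T)
    (hh : ∀ j, h j ≠ 0)
    (lam : ℂ) (hre : 0 ≤ lam.re) (hne : lam ≠ 0)
    (P₀ : Matrix (Fin n) (Fin n) ℂ)
    (hP₀ : P₀ = (T.map Complex.ofReal)ᵀ *
        Matrix.diagonal (fun j => ((h j : ℂ) + ((h j : ℂ) ^ 2 + 4 * lam) ^ ((1 : ℂ) / 2)) / 2) *
        T.map Complex.ofReal) :
    ((∃ σ : Fin n → ℂ, (∀ j, 0 < (σ j).re) ∧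
        P₀ = (T.map Complex.ofReal)ᵀ * Matrix.diagonal σ * T.map Complex.ofReal) ∧
      P₀ ^ 2 - P₀ * Q.map Complex.ofReal - lam • 1 = 0) ∧
    ∀ P : Matrix (Fin n) (Fin n) ℂ,
      ((∃ σ : Fin n → ℂ, (∀ j, 0 < (σ j).re) ∧
          P = (T.map Complex.ofReal)ᵀ * Matrix.diagonal σ * T.map Complex.ofReal) ∧
        P ^ 2 - P * Q.map Complex.ofReal - lam • 1 = 0) → P = P₀ := by
  set U : Matrix (Fin n) (Fin n) ℂ := T.map Complex.ofReal with hU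
  set σ₀ : Fin n → ℂ :=
    fun j => ((h j : ℂ) + ((h j : ℂ) ^ 2 + 4 * lam) ^ ((1 : ℂ) / 2)) / 2 with hσ₀
  have hU1 : U * Uᵀ = 1 := by
    have := congrArg (fun M => M.map (Complex.ofRealHom : ℝ →+* ℂ)) hT
    simp only [Matrix.map_mul, Matrix.map_one _ (map_zero _) (map_one _)] at this
    simpa [hU, Matrix.transpose_map, show (⇑Complex.ofRealHom : ℝ → ℂ) = Complex.ofReal from rfl] using this
  have hU2 : Uᵀ * U = 1 := mul_eq_one_comm.mp hU1
  have hQc : Q.map Complex.ofReal = Uᵀ * Matrix.diagonal (fun j => (h j : ℂ)) * U := by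
    have := congrArg (fun M => M.map (Complex.ofRealHom : ℝ →+* ℂ)) hdiag
    simp only [Matrix.map_mul] at this
    simpa [hU, Matrix.transpose_map, Matrix.diagonal_map (map_zero _), Function.comp, show (⇑Complex.ofRealHom : ℝ → ℂ) = Complex.ofReal from rfl] using this
  have hconj : ∀ D D' : Fin n → ℂ,
      (Uᵀ * Matrix.diagonal D * U) * (Uᵀ * Matrix.diagonal D' * U)
        = Uᵀ * Matrix.diagonal (fun j => D j * D' j) * U := by
    intro D D'
    calc (Uᵀ * Matrix.diagonal D * U) * (Uᵀ * Matrix.diagonal D' * U)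
        = Uᵀ * Matrix.diagonal D * (U * Uᵀ) * (Matrix.diagonal D' * U) := by
          simp only [Matrix.mul_assoc]
      _ = Uᵀ * (Matrix.diagonal D * Matrix.diagonal D') * U := by
          rw [hU1, Matrix.mul_one]
          simp only [Matrix.mul_assoc]
      _ = Uᵀ * Matrix.diagonal (fun j => D j * D' j) * U := by
          rw [Matrix.diagonal_mul_diagonal]
  have hsmul : lam • (1 : Matrix (Fin n) (Fin n) ℂ)
      = Uᵀ * Matrix.diagonal (fun _ => lam) * U := by
    rw [← Matrix.smul_one_eq_diagonal, Matrix.mul_smul, Matrix.smul_mul, Matrix.mul_one, hU2]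
  have hquad : ∀ (τ : Fin n → ℂ),
      (Uᵀ * Matrix.diagonal τ * U) ^ 2 - (Uᵀ * Matrix.diagonal τ * U) * Q.map Complex.ofReal
        - lam • 1 = Uᵀ * Matrix.diagonal (fun j => τ j ^ 2 - τ j * h j - lam) * U := by
    intro τ
    rw [sq, hconj, hQc, hconj, hsmul, ← Matrix.sub_mul, ← Matrix.sub_mul,
      ← Matrix.mul_sub, ← Matrix.mul_sub, Matrix.diagonal_sub, Matrix.diagonal_sub]
    refine congrArg (fun M => Uᵀ * M * U) ?_
    exact congrArg Matrix.diagonal (funext fun j => by ring)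
  have hkey := fun j => quad_key (h j) (hh j) lam hre hne
  have hmain : P₀ ^ 2 - P₀ * Q.map Complex.ofReal - lam • 1 = 0 := by
    rw [hP₀]
    rw [hquad σ₀]
    have : (fun j => σ₀ j ^ 2 - σ₀ j * h j - lam) = fun _ => (0:ℂ) := by
      funext j
      have := (hkey j).2.1
      rw [hσ₀]
      linear_combination this
    rw [this, Matrix.diagonal_zero, Matrix.mul_zero, Matrix.zero_mul]
  refine ⟨⟨⟨σ₀, fun j => (hkey j).1, hP₀⟩, hmain⟩, ?_⟩
  rintro P ⟨⟨τ, hτre, hτeq⟩, hPeq⟩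
  rw [hτeq] at hPeq
  rw [hquad τ] at hPeq
  have hdg : Matrix.diagonal (fun j => τ j ^ 2 - τ j * (h j : ℂ) - lam) = 0 := by
    have e : U * (Uᵀ * Matrix.diagonal (fun j => τ j ^ 2 - τ j * (h j : ℂ) - lam) * U) * Uᵀ
        = Matrix.diagonal (fun j => τ j ^ 2 - τ j * (h j : ℂ) - lam) := by
      calc U * (Uᵀ * Matrix.diagonal (fun j => τ j ^ 2 - τ j * (h j : ℂ) - lam) * U) * Uᵀ
          = (U * Uᵀ) * Matrix.diagonal (fun j => τ j ^ 2 - τ j * (h j : ℂ) - lam) * (U * Uᵀ) := by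
            simp only [Matrix.mul_assoc]
        _ = _ := by rw [hU1, Matrix.one_mul, Matrix.mul_one]
    rw [← e, hPeq, Matrix.mul_zero, Matrix.zero_mul]
  have hτσ : τ = σ₀ := by
    funext j
    have hz : τ j ^ 2 - τ j * h j - lam = 0 := by
      have := congrFun (congrFun hdg j) j
      simpa [Matrix.diagonal_apply_eq] using this
    exact (hkey j).2.2 (τ j) (hτre j) (by linear_combination hz)
  rw [hτeq, hτσ, hP₀]
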